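/- Let (X,T) be a linear dynamical system. If T is recurrent and cyclic, then the set of cyclic vectors for T is a dense Gδ subset of X; in particular, T is quasi-rigid. -/

import Mathlib

open Filter Topology Set

/-- A point `x` is recurrent for `T` if `x` belongs to the closure of `{T^n x : n ≥ 1}`. -/
def RecPt {X : Type*} [TopologicalSpace X] (T : X → X) (x : X) : Prop :=
  x ∈ closure (Set.range fun n : ℕ => T^[n + 1] x)

/-- `T` is quasi-rigid. -/
def QuasiRigid {X : Type*} [TopologicalSpace X] (T : X → X) : Prop :=
  ∃ nk : ℕ → ℕ, StrictMono nk ∧ (∀ k, 1 ≤ nk k) ∧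
    ∃ Y : Set X, Dense Y ∧ ∀ y ∈ Y, Tendsto (fun k => T^[nk k] y) atTop (𝓝 y)

/-- `x` is a cyclic vector for `T`: the span of the orbit `{T^n x : n ∈ ℕ₀}` is dense. -/
def CyclicVector {𝕜 : Type*} [RCLike 𝕜] {X : Type*} [AddCommGroup X] [Module 𝕜 X]
    [TopologicalSpace X] (T : X →L[𝕜] X) (x : X) : Prop :=
  Dense (Submodule.span 𝕜 (Set.range fun n : ℕ => (⇑T)^[n] x) : Set X)


section aux
variable {𝕜 : Type*} [RCLike 𝕜] {X : Type*} [AddCommGroup X] [Module 𝕜 X]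
    [TopologicalSpace X] [IsTopologicalAddGroup X] [ContinuousSMul 𝕜 X]

variable (T : X →L[𝕜] X)

/-- evaluation of polynomial applied to a vector, as a linear map in the polynomial -/
noncomputable def polyEval (x : X) : Polynomial 𝕜 →ₗ[𝕜] X where
  toFun p := Polynomial.aeval T p x
  map_add' p q := by simp [ContinuousLinearMap.add_apply]
  map_smul' c p := by simp [ContinuousLinearMap.smul_apply]

lemma polyEval_apply (x : X) (p : Polynomial 𝕜) : polyEval T x p = Polynomial.aeval T p x := rfl

lemma span_orbit_eq (x : X) :
    Submodule.span 𝕜 (Set.range fun n : ℕ => (⇑T)^[n] x) = LinearMap.range (polyEval T x) := by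
  apply le_antisymm
  · rw [Submodule.span_le]
    rintro - ⟨n, rfl⟩
    exact ⟨Polynomial.X ^ n, by
      simp [polyEval_apply]⟩
  · rintro - ⟨p, rfl⟩
    induction p using Polynomial.induction_on' with
    | add p q hp hq => rw [map_add]; exact Submodule.add_mem _ hp hq
    | monomial n a =>
        rw [polyEval_apply]
        have : Polynomial.aeval T (Polynomial.monomial n a) = a • T ^ n := by
          simp [Polynomial.aeval_monomial, Algebra.algebraMap_eq_smul_one, smul_mul_assoc]
        rw [this]
        simp only [ContinuousLinearMap.smul_apply, ContinuousLinearMap.coe_pow']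
        exact Submodule.smul_mem _ _ (Submodule.subset_span ⟨n, rfl⟩)

lemma cyclicVector_iff_denseRange (x : X) :
    CyclicVector T x ↔ DenseRange (polyEval T x) := by
  unfold CyclicVector DenseRange
  rw [span_orbit_eq]
  constructor <;> intro h <;> convert h using 2 <;>
    simp [LinearMap.coe_range]

end aux
section aux2
variable {𝕜 : Type*} [RCLike 𝕜] {X : Type*} [AddCommGroup X] [Module 𝕜 X]
    [TopologicalSpace X] [IsTopologicalAddGroup X] [ContinuousSMul 𝕜 X]

variable {T : X →L[𝕜] X}

lemma recPt_mem_closure_tail [T1Space X] {r : X} (hr : RecPt (⇑T) r) (N : ℕ) :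
    r ∈ closure ((fun n : ℕ => (⇑T)^[n] r) '' {n | N ≤ n ∧ 1 ≤ n}) := by
  by_cases hper : ∃ m, 1 ≤ m ∧ (⇑T)^[m] r = r
  · obtain ⟨m, hm1, hmr⟩ := hper
    apply subset_closure
    refine ⟨m * (N + 1), ⟨?_, ?_⟩, ?_⟩
    · calc N ≤ N + 1 := Nat.le_succ N
        _ = 1 * (N+1) := (one_mul _).symm
        _ ≤ m * (N + 1) := Nat.mul_le_mul_right _ hm1
    · exact le_trans hm1 (Nat.le_mul_of_pos_right m (Nat.succ_pos N))
    · show (⇑T)^[m * (N+1)] r = r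
      rw [Function.iterate_mul]
      exact Function.IsFixedPt.iterate hmr (N + 1)
  · push_neg at hper
    have h0 : r ∈ closure (Set.range fun n : ℕ => (⇑T)^[n+1] r) := hr
    have hsplit : (Set.range fun n : ℕ => (⇑T)^[n+1] r) =
        ((fun n : ℕ => (⇑T)^[n+1] r) '' {n | n < N}) ∪
        ((fun n : ℕ => (⇑T)^[n+1] r) '' {n | N ≤ n}) := by
      have huniv : {n : ℕ | n < N} ∪ {n : ℕ | N ≤ n} = Set.univ := by
        ext n; simp [Nat.lt_or_ge n N]
      rw [← Set.image_union, huniv, Set.image_univ]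
    rw [hsplit, closure_union] at h0
    have hfin : ((fun n : ℕ => (⇑T)^[n+1] r) '' {n | n < N}).Finite :=
      Set.Finite.image _ (Set.finite_lt_nat N)
    rw [hfin.isClosed.closure_eq] at h0
    have hnot : r ∉ (fun n : ℕ => (⇑T)^[n+1] r) '' {n | n < N} := by
      rintro ⟨n, -, hn⟩
      exact hper (n+1) (Nat.succ_le_succ (Nat.zero_le n)) hn
    rcases h0 with h0 | h0
    · exact absurd h0 hnot
    · refine closure_mono ?_ h0
      rintro - ⟨n, hn, rfl⟩
      exact ⟨n + 1, ⟨le_trans hn (Nat.le_succ n), Nat.succ_le_succ (Nat.zero_le n)⟩, rfl⟩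

lemma recPt_returns [T1Space X] {r : X} (hr : RecPt (⇑T) r) {V : Set X} (hV : V ∈ 𝓝 r) (N : ℕ) :
    ∃ n, N ≤ n ∧ 1 ≤ n ∧ (⇑T)^[n] r ∈ V := by
  have h := recPt_mem_closure_tail hr N
  rw [mem_closure_iff_nhds] at h
  obtain ⟨y, hyV, ⟨n, ⟨hn1, hn2⟩, rfl⟩⟩ := h V hV
  exact ⟨n, hn1, hn2, hyV⟩

lemma denseRange_of_rec_mem (hrec : Dense {x : X | RecPt (⇑T) x}) {A : X →L[𝕜] X}
    (h : ∀ r : X, RecPt (⇑T) r → r ∈ closure (Set.range ⇑A)) : DenseRange ⇑A := by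
  have h2 : Dense (closure (Set.range ⇑A)) := hrec.mono h
  exact Dense.of_closure h2

lemma denseRange_linear_factor [T1Space X] (hrec : Dense {x : X | RecPt (⇑T) x}) (a : 𝕜)
    (ha : ‖a‖ ≠ 1) : DenseRange ⇑(T + a • (1 : X →L[𝕜] X)) := by
  set A : X →L[𝕜] X := T + a • (1 : X →L[𝕜] X) with hA
  apply denseRange_of_rec_mem hrec
  intro r hr
  set ν : 𝕜 := -a with hν
  -- witness sequence
  set w : ℕ → X := fun n => Nat.rec 0 (fun n wn => ν • wn + (⇑T)^[n] r) n with hw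
  have hw0 : w 0 = 0 := rfl
  have hwsucc : ∀ n, w (n+1) = ν • w n + (⇑T)^[n] r := fun n => rfl
  have hAw : ∀ n, A (w n) = (⇑T)^[n] r - ν ^ n • r := by
    intro n
    induction n with
    | zero => simp [hw0]
    | succ n ih =>
        rw [hwsucc, map_add, map_smul, ih]
        have hATn : A ((⇑T)^[n] r) = (⇑T)^[n+1] r + a • (⇑T)^[n] r := by
          simp [hA, ContinuousLinearMap.add_apply, Function.iterate_succ_apply']
        rw [hATn]
        rw [smul_sub, smul_smul, ← pow_succ', Function.iterate_succ_apply', hν]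
        module
  rw [mem_closure_iff_nhds]
  intro U hU
  rcases lt_or_gt_of_ne ha with hlt | hgt
  · -- small root
    have hcont : ContinuousAt (fun q : 𝕜 × X => q.2 - q.1 • r) (0, r) := by fun_prop
    have hU' : (fun q : 𝕜 × X => q.2 - q.1 • r) ⁻¹' U ∈ 𝓝 ((0 : 𝕜), r) := by
      apply hcont.preimage_mem_nhds
      simpa using hU
    rw [mem_nhds_prod_iff] at hU'
    obtain ⟨u, hu, v, hv, huv⟩ := hU'
    have hν1 : ‖ν‖ < 1 := by rwa [hν, norm_neg]
    have htend : Tendsto (fun n => ν ^ n) atTop (𝓝 0) :=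
      tendsto_pow_atTop_nhds_zero_of_norm_lt_one hν1
    obtain ⟨N, hN⟩ := (htend.eventually_mem hu).exists_forall_of_atTop
    obtain ⟨n, hnN, -, hnv⟩ := recPt_returns hr hv N
    exact ⟨(⇑T)^[n] r - ν ^ n • r, huv (Set.mk_mem_prod (hN n hnN) hnv), w n, hAw n⟩
  · -- large root
    have hν0 : ν ≠ 0 := by
      rw [hν, neg_ne_zero]; intro h; rw [h] at hgt; norm_num at hgt
    have hAw' : ∀ n, A ((-(ν⁻¹ ^ n)) • w n) = r - (ν⁻¹) ^ n • (⇑T)^[n] r := by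
      intro n
      have hinv : ν⁻¹ ^ n * ν ^ n = 1 := by
        rw [← mul_pow, inv_mul_cancel₀ hν0, one_pow]
      rw [map_smul, hAw, neg_smul, smul_sub, smul_smul, hinv, one_smul, neg_sub]
    have hcont : ContinuousAt (fun q : 𝕜 × X => r - q.1 • q.2) ((0 : 𝕜), r) := by fun_prop
    have hU' : (fun q : 𝕜 × X => r - q.1 • q.2) ⁻¹' U ∈ 𝓝 ((0 : 𝕜), r) := by
      apply hcont.preimage_mem_nhds
      simpa using hU
    rw [mem_nhds_prod_iff] at hU'
    obtain ⟨u, hu, v, hv, huv⟩ := hU'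
    have hν1 : ‖ν⁻¹‖ < 1 := by
      rw [norm_inv]
      rw [hν, norm_neg] at *
      exact inv_lt_one_of_one_lt₀ hgt
    have htend : Tendsto (fun n => ν⁻¹ ^ n) atTop (𝓝 0) :=
      tendsto_pow_atTop_nhds_zero_of_norm_lt_one hν1
    obtain ⟨N, hN⟩ := (htend.eventually_mem hu).exists_forall_of_atTop
    obtain ⟨n, hnN, -, hnv⟩ := recPt_returns hr hv N
    exact ⟨r - ν⁻¹ ^ n • (⇑T)^[n] r, huv (Set.mk_mem_prod (hN n hnN) hnv),
      (-(ν⁻¹ ^ n)) • w n, hAw' n⟩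

end aux2
section lyapunov

lemma lyapunov_tendsto_zero {b c : ℝ} (hb : b^2 < 4*c) (hc : c < 1) (a : ℕ → ℝ)
    (hrecur : ∀ n, a (n+2) = -b * a (n+1) - c * a n) : Tendsto a atTop (𝓝 0) := by
  have hc0 : 0 < c := by nlinarith [sq_nonneg b]
  set E : ℕ → ℝ := fun n => (a (n+1))^2 + b * a (n+1) * a n + c * (a n)^2 with hE
  have hstep : ∀ n, E (n+1) = c * E n := by
    intro n; simp only [hE]; rw [hrecur n]; ring
  have hEn : ∀ n, E n = c ^ n * E 0 := by
    intro n; induction n with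
    | zero => simp
    | succ n ih => rw [hstep n, ih, pow_succ]; ring
  have hpos : 0 < c - b^2/4 := by nlinarith
  have hbound : ∀ n, (c - b^2/4) * (a n)^2 ≤ E n := by
    intro n; simp only [hE]; nlinarith [sq_nonneg (a (n+1) + (b/2) * a n)]
  have h1 : ∀ n, (a n)^2 ≤ c ^ n * (E 0 / (c - b^2/4)) := by
    intro n
    have h2 := hbound n
    rw [hEn n] at h2
    rw [← mul_div_assoc, le_div_iff₀ hpos]
    nlinarith [h2]
  have htendK : Tendsto (fun n => c ^ n * (E 0 / (c - b^2/4))) atTop (𝓝 0) := by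
    have := (tendsto_pow_atTop_nhds_zero_of_lt_one hc0.le hc).mul_const (E 0 / (c - b^2/4))
    simpa using this
  have hsq : Tendsto (fun n => (a n)^2) atTop (𝓝 0) :=
    squeeze_zero (fun n => sq_nonneg _) h1 htendK
  rw [tendsto_zero_iff_abs_tendsto_zero]
  have := (Real.continuous_sqrt.tendsto 0).comp hsq
  simp only [Function.comp_def, Real.sqrt_sq_eq_abs, Real.sqrt_zero] at this
  exact this

end lyapunov

section quadratic
variable {𝕜 : Type*} [RCLike 𝕜] {X : Type*} [AddCommGroup X] [Module 𝕜 X]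
    [TopologicalSpace X] [IsTopologicalAddGroup X] [ContinuousSMul 𝕜 X]

variable {T : X →L[𝕜] X}

lemma denseRange_quadratic_factor [T1Space X] (hrec : Dense {x : X | RecPt (⇑T) x})
    (b c : ℝ) (hdisc : b^2 < 4*c) (hc1 : c ≠ 1) :
    DenseRange ⇑(Polynomial.aeval T (Polynomial.X^2 + Polynomial.C ((b:𝕜)) * Polynomial.X + Polynomial.C ((c:𝕜))) : X →L[𝕜] X) := by
  have hc0 : 0 < c := by nlinarith [sq_nonneg b]
  set fp : Polynomial 𝕜 := Polynomial.X^2 + Polynomial.C ((b:𝕜)) * Polynomial.X + Polynomial.C ((c:𝕜)) with hfp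
  set A : X →L[𝕜] X := Polynomial.aeval T fp with hAdef
  apply denseRange_of_rec_mem hrec
  intro r hr
  rcases lt_or_gt_of_ne hc1 with hlt | hgt
  · -- roots inside the unit disc : remainder of X^n mod fp tends to 0
    -- sequences
    set p : ℕ → ℝ × ℝ := fun n => Nat.rec ((0:ℝ), (1:ℝ))
      (fun _ q => (q.2 - b * q.1, -c * q.1)) n with hp
    set a : ℕ → ℝ := fun n => (p n).1 with ha
    set s : ℕ → ℝ := fun n => (p n).2 with hs
    have ha0 : a 0 = 0 := rfl
    have hs0 : s 0 = 1 := rfl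
    have hasucc : ∀ n, a (n+1) = s n - b * a n := fun n => rfl
    have hssucc : ∀ n, s (n+1) = -c * a n := fun n => rfl
    have harec : ∀ n, a (n+2) = -b * a (n+1) - c * a n := by
      intro n
      calc a (n+2) = s (n+1) - b * a (n+1) := hasucc (n+1)
        _ = -b * a (n+1) - c * a n := by rw [hssucc n]; ring
    have haten : Tendsto a atTop (𝓝 0) := lyapunov_tendsto_zero hdisc hlt a harec
    have hsten : Tendsto s atTop (𝓝 0) := by
      rw [← tendsto_add_atTop_iff_nat 1]
      have hfun : (fun n => s (n + 1)) = fun n => -c * a n := funext fun n => hssucc n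
      rw [hfun]
      simpa using haten.const_mul (-c)
    -- polynomial identity
    have hpoly : ∀ n, ∃ Q : Polynomial 𝕜, (Polynomial.X : Polynomial 𝕜)^n =
        fp * Q + Polynomial.C ((a n : 𝕜)) * Polynomial.X + Polynomial.C ((s n : 𝕜)) := by
      intro n
      induction n with
      | zero =>
          refine ⟨0, ?_⟩
          rw [ha0, hs0]
          push_cast
          simp
      | succ n ih =>
          obtain ⟨Q, hQ⟩ := ih
          refine ⟨Polynomial.X * Q + Polynomial.C ((a n : 𝕜)), ?_⟩
          have h1 : (Polynomial.X : Polynomial 𝕜)^(n+1) = Polynomial.X * Polynomial.X^n := by ring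
          rw [h1, hQ, hasucc, hssucc]
          push_cast
          simp only [map_sub, map_mul, map_neg]
          rw [hfp]
          ring
    -- apply aeval and then to r
    have hop : ∀ n, ∃ v : X, A v = (⇑T)^[n] r - ((a n : 𝕜)) • (T r) - ((s n : 𝕜)) • r := by
      intro n
      obtain ⟨Q, hQ⟩ := hpoly n
      refine ⟨(Polynomial.aeval T Q) r, ?_⟩
      have h2 : (T ^ n : X →L[𝕜] X) = A * (Polynomial.aeval T Q)
          + ((a n : 𝕜)) • T + ((s n : 𝕜)) • (1 : X →L[𝕜] X) := by
        have h4 := congrArg (Polynomial.aeval T) hQ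
        simp only [map_add, map_mul, map_pow, Polynomial.aeval_X, Polynomial.aeval_C] at h4
        rw [← Algebra.smul_def, Algebra.algebraMap_eq_smul_one] at h4
        exact h4
      have h3 := congrArg (fun (S : X →L[𝕜] X) => S r) h2
      simp only [ContinuousLinearMap.add_apply, ContinuousLinearMap.mul_apply,
        ContinuousLinearMap.smul_apply, ContinuousLinearMap.one_apply] at h3
      rw [← ContinuousLinearMap.coe_pow', h3]
      abel
    -- continuity trick
    rw [mem_closure_iff_nhds]
    intro U hU
    have hcont : ContinuousAt (fun q : ℝ × ℝ × X => q.2.2 - ((q.1 : 𝕜)) • (T r) - ((q.2.1 : 𝕜)) • r)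
        ((0:ℝ), (0:ℝ), r) := by fun_prop
    have hU' : (fun q : ℝ × ℝ × X => q.2.2 - ((q.1 : 𝕜)) • (T r) - ((q.2.1 : 𝕜)) • r) ⁻¹' U ∈
        𝓝 (((0:ℝ), (0:ℝ), r)) := by
      apply hcont.preimage_mem_nhds
      simpa using hU
    rw [mem_nhds_prod_iff] at hU'
    obtain ⟨u, hu, vw, hvw, huvw⟩ := hU'
    rw [mem_nhds_prod_iff] at hvw
    obtain ⟨u2, hu2, v, hv, hu2v⟩ := hvw
    obtain ⟨N1, hN1⟩ := (haten.eventually_mem hu).exists_forall_of_atTop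
    obtain ⟨N2, hN2⟩ := (hsten.eventually_mem hu2).exists_forall_of_atTop
    obtain ⟨n, hnN, -, hnv⟩ := recPt_returns hr hv (max N1 N2)
    obtain ⟨v0, hv0⟩ := hop n
    refine ⟨A v0, ?_, v0, rfl⟩
    rw [hv0]
    exact huvw (Set.mk_mem_prod (hN1 n (le_trans (le_max_left _ _) hnN))
      (hu2v (Set.mk_mem_prod (hN2 n (le_trans (le_max_right _ _) hnN)) hnv)))
  · -- roots outside the unit disc
    have hcne : (0:ℝ) < c := hc0
    -- integer-like sequences
    set p : ℕ → ℝ × ℝ := fun n => Nat.rec ((1:ℝ), (0:ℝ))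
      (fun _ q => (c * q.2 - b * q.1, -q.1)) n with hp
    set G : ℕ → ℝ := fun n => (p n).1 with hG
    set D : ℕ → ℝ := fun n => (p n).2 with hD
    have hG0 : G 0 = 1 := rfl
    have hD0 : D 0 = 0 := rfl
    have hGsucc : ∀ n, G (n+1) = c * D n - b * G n := fun n => rfl
    have hDsucc : ∀ n, D (n+1) = -G n := fun n => rfl
    -- normalized sequences
    set γ : ℕ → ℝ := fun n => G n / c^n with hγ
    set δ : ℕ → ℝ := fun n => D n / c^n with hδ
    have hcne0 : c ≠ 0 := ne_of_gt hc0
    have hγrec : ∀ n, γ (n+2) = -(b/c) * γ (n+1) - (1/c) * γ n := by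
      intro n
      have e0 : γ (n+2) = (c * D (n+1) - b * G (n+1)) / c^(n+2) := by
        rw [show γ (n+2) = G (n+2) / c^(n+2) from rfl,
          show G (n+2) = c * D (n+1) - b * G (n+1) from rfl]
      have e1 : D (n+1) = -G n := rfl
      have e2 : γ (n+1) = G (n+1) / c^(n+1) := rfl
      have e3 : γ n = G n / c^n := rfl
      rw [e0, e1, e2, e3]
      field_simp
      ring
    have hγten : Tendsto γ atTop (𝓝 0) := by
      apply lyapunov_tendsto_zero (b := b/c) (c := 1/c) _ _ γ hγrec
      · rw [div_pow, one_div, div_lt_iff₀ (by positivity : (0:ℝ) < c^2)]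
        have h44 : 4 * c⁻¹ * c^2 = 4 * c := by
          field_simp
        rw [h44]
        nlinarith
      · rw [div_lt_one hc0]; exact hgt
    have hδten : Tendsto δ atTop (𝓝 0) := by
      rw [← tendsto_add_atTop_iff_nat 1]
      have hfun : (fun n => δ (n + 1)) = fun n => -(1/c) * γ n := by
        funext n
        rw [show δ (n+1) = D (n+1) / c^(n+1) from rfl, show D (n+1) = -G n from rfl,
          show γ n = G n / c^n from rfl, pow_succ]
        field_simp
      rw [hfun]
      simpa using hγten.const_mul (-(1/c))
    -- polynomial identity
    have hpoly : ∀ n, ∃ B : Polynomial 𝕜, (Polynomial.C ((c:𝕜)))^n =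
        fp * B + Polynomial.C ((G n : 𝕜)) * Polynomial.X^n
          + Polynomial.C ((D n : 𝕜)) * Polynomial.X^(n+1) := by
      intro n
      induction n with
      | zero =>
          refine ⟨0, ?_⟩
          rw [hG0, hD0]
          push_cast
          simp
      | succ n ih =>
          obtain ⟨B, hB⟩ := ih
          refine ⟨Polynomial.C ((c:𝕜)) * B + Polynomial.C ((G n : 𝕜)) * Polynomial.X^n, ?_⟩
          have h1 : (Polynomial.C ((c:𝕜)))^(n+1) = Polynomial.C ((c:𝕜)) * (Polynomial.C ((c:𝕜)))^n := by
            ring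
          rw [h1, hB, hGsucc, hDsucc]
          push_cast
          simp only [map_sub, map_mul, map_neg]
          rw [hfp]
          ring
    -- operator identity applied to r
    have hop : ∀ n, ∃ v : X, A v = r - ((γ n : 𝕜)) • ((T^n : X →L[𝕜] X) r)
        - ((δ n : 𝕜)) • ((T^(n+1) : X →L[𝕜] X) r) := by
      intro n
      obtain ⟨B, hB⟩ := hpoly n
      have hcn : ((c:𝕜))^n ≠ 0 := by
        apply pow_ne_zero
        simp only [ne_eq, RCLike.ofReal_eq_zero]
        exact ne_of_gt hc0
      refine ⟨(((c:𝕜))^n)⁻¹ • (Polynomial.aeval T B) r, ?_⟩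
      have h2 : (algebraMap 𝕜 (X →L[𝕜] X) ((c:𝕜)))^n = A * (Polynomial.aeval T B)
          + algebraMap 𝕜 (X →L[𝕜] X) ((G n : 𝕜)) * (T^n)
          + algebraMap 𝕜 (X →L[𝕜] X) ((D n : 𝕜)) * (T^(n+1)) := by
        have h4 := congrArg (Polynomial.aeval T) hB
        simp only [map_pow, map_add, map_mul, Polynomial.aeval_X, Polynomial.aeval_C] at h4
        exact h4
      rw [← Algebra.smul_def, ← Algebra.smul_def, ← map_pow,
        Algebra.algebraMap_eq_smul_one] at h2
      have h3 := congrArg (fun (S : X →L[𝕜] X) => (((c:𝕜))^n)⁻¹ • (S r)) h2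
      simp only [ContinuousLinearMap.add_apply, ContinuousLinearMap.mul_apply,
        ContinuousLinearMap.smul_apply, ContinuousLinearMap.one_apply] at h3
      rw [inv_smul_smul₀ hcn, smul_add, smul_add] at h3
      have h6 : r - (((c:𝕜))^n)⁻¹ • (((G n:𝕜)) • ((T^n : X →L[𝕜] X) r))
            - (((c:𝕜))^n)⁻¹ • (((D n:𝕜)) • ((T^(n+1) : X →L[𝕜] X) r))
          = (((c:𝕜))^n)⁻¹ • (A ((Polynomial.aeval T B) r)) := by
        nth_rewrite 1 [h3]
        abel
      have hγc : ((γ n : ℝ) : 𝕜) = (((c:𝕜))^n)⁻¹ * ((G n : 𝕜)) := by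
        simp only [hγ]
        push_cast
        rw [div_eq_inv_mul]
      have hδc : ((δ n : ℝ) : 𝕜) = (((c:𝕜))^n)⁻¹ * ((D n : 𝕜)) := by
        simp only [hδ]
        push_cast
        rw [div_eq_inv_mul]
      rw [map_smul, ← h6, hγc, hδc, mul_smul, mul_smul]
    -- continuity trick
    rw [mem_closure_iff_nhds]
    intro U hU
    have hcont : ContinuousAt (fun q : ℝ × ℝ × X => r - ((q.1 : 𝕜)) • q.2.2 - ((q.2.1 : 𝕜)) • (T q.2.2))
        ((0:ℝ), (0:ℝ), r) := by fun_prop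
    have hU' : (fun q : ℝ × ℝ × X => r - ((q.1 : 𝕜)) • q.2.2 - ((q.2.1 : 𝕜)) • (T q.2.2)) ⁻¹' U ∈
        𝓝 (((0:ℝ), (0:ℝ), r)) := by
      apply hcont.preimage_mem_nhds
      simpa using hU
    rw [mem_nhds_prod_iff] at hU'
    obtain ⟨u, hu, vw, hvw, huvw⟩ := hU'
    rw [mem_nhds_prod_iff] at hvw
    obtain ⟨u2, hu2, v, hv, hu2v⟩ := hvw
    obtain ⟨N1, hN1⟩ := (hγten.eventually_mem hu).exists_forall_of_atTop
    obtain ⟨N2, hN2⟩ := (hδten.eventually_mem hu2).exists_forall_of_atTop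
    obtain ⟨n, hnN, -, hnv⟩ := recPt_returns hr hv (max N1 N2)
    obtain ⟨v0, hv0⟩ := hop n
    refine ⟨A v0, ?_, v0, rfl⟩
    rw [hv0]
    have he1 : ((T^n : X →L[𝕜] X) r) = (⇑T)^[n] r := by
      rw [ContinuousLinearMap.coe_pow']
    have he2 : ((T^(n+1) : X →L[𝕜] X) r) = T ((⇑T)^[n] r) := by
      rw [ContinuousLinearMap.coe_pow', Function.iterate_succ_apply']
    rw [he1, he2]
    exact huvw (Set.mk_mem_prod (hN1 n (le_trans (le_max_left _ _) hnN))
      (hu2v (Set.mk_mem_prod (hN2 n (le_trans (le_max_right _ _) hnN)) hnv)))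

end quadratic
section classify

lemma real_classify {g : Polynomial ℝ} (hm : g.Monic) (hirr : Irreducible g) :
    g.natDegree = 1 ∨ ∃ b c : ℝ, b^2 < 4*c ∧
      g = Polynomial.X^2 + Polynomial.C b * Polynomial.X + Polynomial.C c := by
  obtain ⟨z, hz⟩ : ∃ z : ℂ, Polynomial.aeval z g = 0 :=
    IsAlgClosed.exists_aeval_eq_zero _ g (Polynomial.degree_pos_of_irreducible hirr).ne'
  cases eq_or_ne z.im 0 with
  | inl hz0 =>
      left
      lift z to ℝ using hz0
      erw [Polynomial.aeval_ofReal, RCLike.ofReal_eq_zero] at hz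
      exact Polynomial.natDegree_eq_of_degree_eq_some
        (Polynomial.degree_eq_one_of_irreducible_of_root hirr hz)
  | inr hz0 =>
      right
      obtain ⟨q, hgq⟩ := g.quadratic_dvd_of_aeval_eq_zero_im_ne_zero hz hz0
      set h : Polynomial ℝ :=
        Polynomial.X^2 - Polynomial.C (2*z.re) * Polynomial.X + Polynomial.C (‖z‖^2) with hh
      have hmh : h.Monic := by
        have hrw : h = Polynomial.X^2 +
            (-(Polynomial.C (2*z.re) * Polynomial.X) + Polynomial.C (‖z‖^2)) := by
          rw [hh]; ring
        rw [hrw]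
        apply Polynomial.monic_X_pow_add
        have hb : (-(Polynomial.C (2*z.re) * Polynomial.X) + Polynomial.C (‖z‖^2)).degree ≤ 1 := by
          compute_degree
        refine lt_of_le_of_lt hb ?_
        exact_mod_cast one_lt_two
      have hhd : h ∣ g := ⟨q, hgq⟩
      have hnu : ¬ IsUnit h := by
        intro hu
        have := Polynomial.natDegree_eq_zero_of_isUnit hu
        have h2 : h.natDegree = 2 := by
          rw [hh]
          compute_degree!
        omega
      have hassoc : Associated h g := by
        rcases hirr.isUnit_or_isUnit hgq with hu | hu
        · exact absurd hu hnu
        · exact ⟨hu.unit, by rw [hgq, IsUnit.unit_spec]⟩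
      have hg_eq : g = h := (Polynomial.eq_of_monic_of_associated hmh hm hassoc).symm
      refine ⟨-(2*z.re), ‖z‖^2, ?_, ?_⟩
      · have hnormsq : ‖z‖^2 = z.re^2 + z.im^2 := by
          rw [Complex.sq_norm, Complex.normSq_apply]
          ring
        have him : z.im ^ 2 ≠ 0 := pow_ne_zero 2 hz0
        have him' : 0 < z.im^2 := (sq_nonneg _).lt_of_ne (Ne.symm him)
        rw [hnormsq]
        nlinarith
      · rw [hg_eq, hh, map_neg]
        ring

variable {𝕜 : Type*} [RCLike 𝕜]

lemma rclike_classify {f : Polynomial 𝕜} (hm : f.Monic) (hirr : Irreducible f) :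
    f.natDegree = 1 ∨ ∃ b c : ℝ, b^2 < 4*c ∧
      f = Polynomial.X^2 + Polynomial.C ((b:𝕜)) * Polynomial.X + Polynomial.C ((c:𝕜)) := by
  rcases @RCLike.I_mul_I_ax 𝕜 _ with hI | hI
  · -- real case : algebraMap ℝ 𝕜 is bijective
    have hsurj : Function.Surjective (algebraMap ℝ 𝕜) := by
      intro x
      refine ⟨RCLike.re x, ?_⟩
      have := RCLike.re_add_im x
      rw [hI, mul_zero, add_zero] at this
      rw [RCLike.algebraMap_eq_ofReal]
      exact this
    set E : ℝ ≃+* 𝕜 := RingEquiv.ofBijective (algebraMap ℝ 𝕜)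
      ⟨(algebraMap ℝ 𝕜).injective, hsurj⟩ with hE
    have hEcoe : ∀ x : ℝ, E x = ((x:𝕜)) := by
      intro x
      rw [hE]
      show algebraMap ℝ 𝕜 x = _
      rw [RCLike.algebraMap_eq_ofReal]
    set g : Polynomial ℝ := f.map (E.symm.toRingHom) with hg
    have hgm : g.Monic := hm.map _
    have hgirr : Irreducible g := by
      have := (MulEquiv.irreducible_iff (Polynomial.mapEquiv E.symm)).mpr hirr
      convert this using 1
      exact hg
    have hfg : f = g.map E.toRingHom := by
      rw [hg, Polynomial.map_map]
      have hcomp : E.toRingHom.comp E.symm.toRingHom = RingHom.id 𝕜 := by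
        ext x
        simp
      rw [hcomp, Polynomial.map_id]
    rcases real_classify hgm hgirr with hdeg | ⟨b, c, hbc, hgeq⟩
    · left
      rw [hfg, Polynomial.natDegree_map E.toRingHom]
      exact hdeg
    · right
      refine ⟨b, c, hbc, ?_⟩
      rw [hfg, hgeq]
      simp only [Polynomial.map_add, Polynomial.map_mul, Polynomial.map_pow,
        Polynomial.map_X, Polynomial.map_C]
      rw [show E.toRingHom b = ((b:𝕜)) from hEcoe b, show E.toRingHom c = ((c:𝕜)) from hEcoe c]
  · -- complex case
    left
    set A : ℂ →ₐ[ℝ] 𝕜 := Complex.liftAux (RCLike.I : 𝕜) hI with hA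
    have hsurj : Function.Surjective A.toRingHom := by
      intro x
      refine ⟨⟨RCLike.re x, RCLike.im x⟩, ?_⟩
      show A _ = x
      rw [hA, Complex.liftAux_apply]
      show algebraMap ℝ 𝕜 (RCLike.re x) + (RCLike.im x) • (RCLike.I : 𝕜) = x
      rw [RCLike.algebraMap_eq_ofReal]
      rw [RCLike.real_smul_eq_coe_mul]
      exact RCLike.re_add_im x
    set E : ℂ ≃+* 𝕜 := RingEquiv.ofBijective A.toRingHom
      ⟨A.toRingHom.injective, hsurj⟩ with hE
    set g : Polynomial ℂ := f.map (E.symm.toRingHom) with hg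
    have hgirr : Irreducible g := by
      have := (MulEquiv.irreducible_iff (Polynomial.mapEquiv E.symm)).mpr hirr
      convert this using 1
      exact hg
    have hdeg : g.degree = 1 := IsAlgClosed.degree_eq_one_of_irreducible _ hgirr
    have hfg : f = g.map E.toRingHom := by
      rw [hg, Polynomial.map_map]
      have hcomp : E.toRingHom.comp E.symm.toRingHom = RingHom.id 𝕜 := by
        ext x
        simp
      rw [hcomp, Polynomial.map_id]
    rw [hfg, Polynomial.natDegree_map E.toRingHom]
    exact Polynomial.natDegree_eq_of_degree_eq_some hdeg

end classify
section factor
variable {𝕜 : Type*} [RCLike 𝕜]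

lemma exists_monic_factorization : ∀ (n : ℕ) (p : Polynomial 𝕜), p ≠ 0 → p.natDegree = n →
    ∃ L : List (Polynomial 𝕜), (∀ f ∈ L, f.Monic ∧ Irreducible f) ∧
      p = Polynomial.C p.leadingCoeff * L.prod := by
  intro n
  induction n using Nat.strong_induction_on with
  | _ n ih =>
    intro p hp hdeg
    by_cases h0 : p.natDegree = 0
    · refine ⟨[], by simp, ?_⟩
      rw [List.prod_nil, mul_one]
      conv_lhs => rw [Polynomial.eq_C_of_natDegree_eq_zero h0]
      rw [Polynomial.leadingCoeff, h0]
    · have hnu : ¬ IsUnit p := fun hu => h0 (Polynomial.natDegree_eq_zero_of_isUnit hu)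
      obtain ⟨g, hgm, hgirr, hgd⟩ := p.exists_monic_irreducible_factor hnu
      obtain ⟨q, hq⟩ := hgd
      have hq0 : q ≠ 0 := by
        rintro rfl
        rw [mul_zero] at hq
        exact hp hq
      have hg0 : g ≠ 0 := hgm.ne_zero
      have hgdeg : 0 < g.natDegree := by
        rcases Nat.eq_zero_or_pos g.natDegree with h | h
        · exact absurd (hgm.natDegree_eq_zero.mp h ▸ isUnit_one) hgirr.not_isUnit
        · exact h
      have hnd : p.natDegree = g.natDegree + q.natDegree := by
        rw [hq]
        exact Polynomial.natDegree_mul hg0 hq0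
      have hdq : q.natDegree < n := by omega
      obtain ⟨L, hL, hqeq⟩ := ih q.natDegree hdq q hq0 rfl
      refine ⟨g :: L, ?_, ?_⟩
      · intro f hf
        rcases List.mem_cons.mp hf with rfl | hf
        · exact ⟨hgm, hgirr⟩
        · exact hL f hf
      · have hlc : p.leadingCoeff = q.leadingCoeff := by
          rw [hq, Polynomial.leadingCoeff_mul, hgm.leadingCoeff, one_mul]
        rw [List.prod_cons, hlc, hq]
        conv_lhs => rw [hqeq]
        ring

end factor

section densecyc
variable {𝕜 : Type*} [RCLike 𝕜] {X : Type*} [AddCommGroup X] [Module 𝕜 X]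
    [TopologicalSpace X] [IsTopologicalAddGroup X] [ContinuousSMul 𝕜 X]

variable {T : X →L[𝕜] X}

lemma cyclicVector_of_denseRange_commute {A : X →L[𝕜] X} (hcomm : Commute A T)
    (hdr : DenseRange ⇑A) {x : X} (hx : CyclicVector T x) : CyclicVector T (A x) := by
  unfold CyclicVector at *
  have hco : ∀ n : ℕ, (⇑T)^[n] (A x) = A ((⇑T)^[n] x) := by
    intro n
    have h1 : Commute A (T ^ n) := hcomm.pow_right n
    have h2 := congrArg (fun (S : X →L[𝕜] X) => S x) h1.eq
    simp only [ContinuousLinearMap.mul_apply] at h2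
    rw [← ContinuousLinearMap.coe_pow']
    exact h2.symm
  have himg : (Set.range fun n : ℕ => (⇑T)^[n] (A x)) =
      ⇑A '' (Set.range fun n : ℕ => (⇑T)^[n] x) := by
    rw [← Set.range_comp]
    exact congrArg Set.range (funext fun n => hco n)
  rw [himg]
  have hspan : Submodule.span 𝕜 (⇑A '' (Set.range fun n : ℕ => (⇑T)^[n] x)) =
      Submodule.map (A : X →ₗ[𝕜] X) (Submodule.span 𝕜 (Set.range fun n : ℕ => (⇑T)^[n] x)) :=
    Submodule.span_image _
  rw [hspan]
  have hset : ((Submodule.map (A : X →ₗ[𝕜] X)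
      (Submodule.span 𝕜 (Set.range fun n : ℕ => (⇑T)^[n] x))) : Set X) =
      ⇑A '' ((Submodule.span 𝕜 (Set.range fun n : ℕ => (⇑T)^[n] x)) : Set X) := rfl
  rw [hset]
  exact hdr.dense_image A.continuous hx

/-- family of perturbed operators attached to a list of monic irreducible factors -/
lemma exists_perturbed_family [T1Space X] (hrec : Dense {x : X | RecPt (⇑T) x}) :
    ∀ L : List (Polynomial 𝕜), (∀ f ∈ L, f.Monic ∧ Irreducible f) →
    ∃ (Φ : ℝ → (X →L[𝕜] X)) (S : Set ℝ), S.Finite ∧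
      (∀ v : X, Continuous fun δ => Φ δ v) ∧
      Φ 0 = Polynomial.aeval T L.prod ∧
      (∀ δ : ℝ, Commute (Φ δ) T) ∧
      (∀ δ : ℝ, 0 < δ → δ ∉ S → DenseRange ⇑(Φ δ)) := by
  intro L
  induction L with
  | nil =>
      intro _
      refine ⟨fun _ => 1, ∅, Set.finite_empty, fun v => continuous_const, by simp, ?_, ?_⟩
      · intro δ; exact Commute.one_left T
      · intro δ _ _
        have : ⇑(1 : X →L[𝕜] X) = id := rfl
        rw [this]
        exact denseRange_id
  | cons f L ihL =>
      intro hall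
      obtain ⟨hfm, hfirr⟩ := hall f (List.mem_cons_self)
      obtain ⟨Φ, S, hSfin, hΦcont, hΦ0, hΦcomm, hΦdr⟩ :=
        ihL (fun g hg => hall g (List.mem_cons_of_mem f hg))
      rcases rclike_classify hfm hfirr with hdeg1 | ⟨b, c, hbc, hfeq⟩
      · -- linear factor
        set a : 𝕜 := f.coeff 0 with ha
        have hfeq : f = Polynomial.X + Polynomial.C a := hfm.eq_X_add_C hdeg1
        set A : ℝ → (X →L[𝕜] X) := fun δ => T + ((((1+δ:ℝ)):𝕜) * a) • (1 : X →L[𝕜] X) with hA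
        have hAcomm : ∀ δ, Commute (A δ) T := by
          intro δ
          unfold Commute SemiconjBy
          rw [hA]
          simp only [add_mul, mul_add, smul_mul_assoc, mul_smul_comm, one_mul, mul_one]
        have hAdr : ∀ δ : ℝ, 0 < δ → ((1+δ) * ‖a‖ ≠ 1) → DenseRange ⇑(A δ) := by
          intro δ hδ hne
          apply denseRange_linear_factor hrec
          rw [norm_mul, RCLike.norm_ofReal, abs_of_pos (by linarith)]
          exact hne
        refine ⟨fun δ => A δ * Φ δ, S ∪ {1/‖a‖ - 1}, hSfin.union (Set.finite_singleton _),
          ?_, ?_, ?_, ?_⟩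
        · intro v
          have hc : Continuous fun δ : ℝ => Φ δ v := hΦcont v
          have : (fun δ : ℝ => (A δ * Φ δ) v) =
              fun δ : ℝ => T (Φ δ v) + ((((1+δ:ℝ)):𝕜) * a) • (Φ δ v) := by
            funext δ
            simp [hA, ContinuousLinearMap.mul_apply, ContinuousLinearMap.add_apply]
          rw [this]
          fun_prop
        · rw [List.prod_cons, map_mul, ← hΦ0]
          have hA0 : A 0 = Polynomial.aeval T f := by
            rw [hfeq, map_add, Polynomial.aeval_X, Polynomial.aeval_C, hA]
            norm_num
            rw [Algebra.algebraMap_eq_smul_one]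
          show A 0 * Φ 0 = _
          rw [hA0]
        · intro δ
          exact (hAcomm δ).mul_left (hΦcomm δ)
        · intro δ hδ hδS
          rw [Set.mem_union] at hδS
          push_neg at hδS
          have h1 : ⇑(A δ * Φ δ) = ⇑(A δ) ∘ ⇑(Φ δ) := rfl
          rw [h1]
          refine DenseRange.comp ?_ (hΦdr δ hδ hδS.1) (A δ).continuous
          apply hAdr δ hδ
          intro heq
          rcases eq_or_ne a 0 with ha0 | ha0
          · rw [ha0, norm_zero, mul_zero] at heq
            exact one_ne_zero heq.symm
          · apply hδS.2
            have hna : ‖a‖ ≠ 0 := norm_ne_zero_iff.mpr ha0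
            rw [Set.mem_singleton_iff]
            field_simp
            linarith [heq]
      · -- quadratic factor
        set A : ℝ → (X →L[𝕜] X) := fun δ =>
          T * T + ((b:𝕜)) • T + (((c+δ:ℝ)):𝕜) • (1 : X →L[𝕜] X) with hA
        have hAcomm : ∀ δ, Commute (A δ) T := by
          intro δ
          unfold Commute SemiconjBy
          rw [hA]
          simp only [add_mul, mul_add, smul_mul_assoc, mul_smul_comm, one_mul, mul_one, mul_assoc]
        have hAeval : ∀ δ : ℝ, A δ = Polynomial.aeval T
            (Polynomial.X^2 + Polynomial.C (((b:ℝ)):𝕜) * Polynomial.X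
              + Polynomial.C (((c+δ:ℝ)):𝕜)) := by
          intro δ
          rw [map_add, map_add, map_mul, map_pow, Polynomial.aeval_X, Polynomial.aeval_C,
            Polynomial.aeval_C, hA]
          rw [Algebra.algebraMap_eq_smul_one, Algebra.algebraMap_eq_smul_one]
          rw [sq]
          rw [smul_mul_assoc, one_mul]
        refine ⟨fun δ => A δ * Φ δ, S ∪ {1 - c}, hSfin.union (Set.finite_singleton _),
          ?_, ?_, ?_, ?_⟩
        · intro v
          have hc : Continuous fun δ : ℝ => Φ δ v := hΦcont v
          have : (fun δ : ℝ => (A δ * Φ δ) v) =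
              fun δ : ℝ => T (T (Φ δ v)) + ((b:𝕜)) • T (Φ δ v) + (((c+δ:ℝ)):𝕜) • (Φ δ v) := by
            funext δ
            simp [hA, ContinuousLinearMap.mul_apply, ContinuousLinearMap.add_apply]
          rw [this]
          fun_prop
        · rw [List.prod_cons, map_mul, ← hΦ0]
          have hA0 : A 0 = Polynomial.aeval T f := by
            rw [hAeval 0, hfeq]
            norm_num
          show A 0 * Φ 0 = _
          rw [hA0]
        · intro δ
          exact (hAcomm δ).mul_left (hΦcomm δ)
        · intro δ hδ hδS
          rw [Set.mem_union] at hδS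
          push_neg at hδS
          have h1 : ⇑(A δ * Φ δ) = ⇑(A δ) ∘ ⇑(Φ δ) := rfl
          rw [h1]
          refine DenseRange.comp ?_ (hΦdr δ hδ hδS.1) (A δ).continuous
          rw [hAeval δ]
          apply denseRange_quadratic_factor hrec
          · nlinarith
          · intro heq
            apply hδS.2
            rw [Set.mem_singleton_iff]
            linarith

end densecyc
section densecyc2
variable {𝕜 : Type*} [RCLike 𝕜] {X : Type*} [AddCommGroup X] [Module 𝕜 X]
    [TopologicalSpace X] [IsTopologicalAddGroup X] [ContinuousSMul 𝕜 X]

variable {T : X →L[𝕜] X}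

lemma dense_cyclicVectors [T1Space X] (hrec : Dense {x : X | RecPt ⇑T x}) {x0 : X}
    (hx0 : CyclicVector T x0) : Dense {x : X | CyclicVector T x} := by
  rw [dense_iff_inter_open]
  intro U hUopen hUne
  have hdr : DenseRange (polyEval T x0) := (cyclicVector_iff_denseRange T x0).mp hx0
  obtain ⟨p, hpU⟩ := hdr.exists_mem_open hUopen hUne
  have hne : ∃ q : Polynomial 𝕜, q ≠ 0 ∧ (Polynomial.aeval T q) x0 ∈ U := by
    rcases eq_or_ne p 0 with rfl | hp0
    · have h0U : (0 : X) ∈ U := by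
        have : polyEval T x0 0 = 0 := by simp [polyEval_apply]
        rwa [this] at hpU
      have hcont : Continuous fun t : 𝕜 => t • x0 := by fun_prop
      have hmem : (fun t : 𝕜 => t • x0) ⁻¹' U ∈ 𝓝 (0:𝕜) := by
        apply hcont.continuousAt.preimage_mem_nhds
        simpa using hUopen.mem_nhds h0U
      rcases Metric.mem_nhds_iff.mp hmem with ⟨ε, hε, hball⟩
      obtain ⟨t, ht0, htε⟩ := NormedField.exists_norm_lt 𝕜 hε
      have htne : t ≠ 0 := by
        intro h
        rw [h, norm_zero] at ht0
        exact lt_irrefl _ ht0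
      refine ⟨Polynomial.C t, by simpa [Polynomial.C_eq_zero] using htne, ?_⟩
      have hmem2 : t • x0 ∈ U := by
        apply hball
        simp [Metric.mem_ball, dist_zero_right, htε]
      have : (Polynomial.aeval T (Polynomial.C t)) x0 = t • x0 := by
        rw [Polynomial.aeval_C, Algebra.algebraMap_eq_smul_one]
        simp
      rwa [this]
    · exact ⟨p, hp0, hpU⟩
  obtain ⟨q, hq0, hqU⟩ := hne
  obtain ⟨L, hL, hfac⟩ := exists_monic_factorization q.natDegree q hq0 rfl
  obtain ⟨Φ, S, hSfin, hΦcont, hΦ0, hΦcomm, hΦdr⟩ := exists_perturbed_family hrec L hL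
  set lc := q.leadingCoeff with hlc
  have hlc0 : lc ≠ 0 := Polynomial.leadingCoeff_ne_zero.mpr hq0
  set v : ℝ → X := fun δ => lc • (Φ δ x0) with hv
  have hv0 : v 0 ∈ U := by
    show lc • (Φ 0 x0) ∈ U
    rw [hΦ0]
    have heq : Polynomial.aeval T q = lc • Polynomial.aeval T L.prod := by
      conv_lhs => rw [hfac]
      rw [map_mul, Polynomial.aeval_C, Algebra.smul_def]
    rw [heq] at hqU
    rw [ContinuousLinearMap.smul_apply] at hqU
    exact hqU
  have hvcont : Continuous v := by
    have := hΦcont x0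
    rw [hv]
    fun_prop
  have hnb : v ⁻¹' U ∈ 𝓝 (0:ℝ) := hvcont.continuousAt.preimage_mem_nhds (hUopen.mem_nhds hv0)
  rcases Metric.mem_nhds_iff.mp hnb with ⟨ε, hε, hball⟩
  have hinf : (Set.Ioo (0:ℝ) ε).Infinite := Set.Ioo_infinite hε
  obtain ⟨δ, hδmem, hδS⟩ := (hinf.diff hSfin).nonempty
  obtain ⟨hδ0, hδε⟩ := hδmem
  refine ⟨v δ, ⟨?_, ?_⟩⟩
  · apply hball
    simp only [Metric.mem_ball, Real.dist_eq, sub_zero]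
    rwa [abs_of_pos hδ0]
  · show CyclicVector T (v δ)
    have hveq : v δ = (lc • Φ δ) x0 := by
      rw [hv, ContinuousLinearMap.smul_apply]
    rw [hveq]
    apply cyclicVector_of_denseRange_commute ?_ ?_ hx0
    · unfold Commute SemiconjBy
      rw [smul_mul_assoc, mul_smul_comm, (hΦcomm δ).eq]
    · have h1 : ⇑(lc • Φ δ) = (fun y : X => lc • y) ∘ ⇑(Φ δ) := rfl
      rw [h1]
      have hsurj : Function.Surjective (fun y : X => lc • y) := by
        intro y
        refine ⟨lc⁻¹ • y, ?_⟩
        show lc • (lc⁻¹ • y) = y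
        rw [smul_smul, mul_inv_cancel₀ hlc0, one_smul]
      exact DenseRange.comp hsurj.denseRange (hΦdr δ hδ0 hδS) (by fun_prop)

end densecyc2
section gdelta
variable {𝕜 : Type*} [RCLike 𝕜] {X : Type*} [AddCommGroup X] [Module 𝕜 X]
    [TopologicalSpace X] [IsTopologicalAddGroup X] [ContinuousSMul 𝕜 X]

variable {T : X →L[𝕜] X}

lemma isGδ_cyclicVectors [SecondCountableTopology X] :
    IsGδ {x : X | CyclicVector T x} := by
  obtain ⟨B, hBc, hBne, hBbasis⟩ := TopologicalSpace.exists_countable_basis X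
  have hchar : {x : X | CyclicVector T x} =
      ⋂ U ∈ B, {x : X | ∃ p : Polynomial 𝕜, (Polynomial.aeval T p) x ∈ U} := by
    ext x
    simp only [Set.mem_setOf_eq, Set.mem_iInter]
    constructor
    · intro hx U hU
      have hUopen : IsOpen U := hBbasis.isOpen hU
      have hUne : U.Nonempty := by
        rcases Set.eq_empty_or_nonempty U with rfl | h
        · exact absurd hU hBne
        · exact h
      have hdr := (cyclicVector_iff_denseRange T x).mp hx
      obtain ⟨p, hp⟩ := hdr.exists_mem_open hUopen hUne
      exact ⟨p, hp⟩
    · intro h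
      rw [cyclicVector_iff_denseRange]
      have hd : Dense (Set.range ⇑(polyEval T x)) := by
        rw [hBbasis.dense_iff]
        intro o ho hone
        obtain ⟨p, hp⟩ := h o ho
        exact ⟨(Polynomial.aeval T p) x, hp, Set.mem_range_self p⟩
      exact hd
  rw [hchar]
  refine IsGδ.biInter hBc ?_
  intro U hU
  apply IsOpen.isGδ
  have hopen : {x : X | ∃ p : Polynomial 𝕜, (Polynomial.aeval T p) x ∈ U} =
      ⋃ p : Polynomial 𝕜, (fun x => (Polynomial.aeval T p) x) ⁻¹' U := by
    ext y
    simp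
  rw [hopen]
  exact isOpen_iUnion fun p => (hBbasis.isOpen hU).preimage (Polynomial.aeval T p).continuous

lemma isGδ_recSet {Y : Type*} [MetricSpace Y] (g : Y → Y) (hg : Continuous g) :
    IsGδ {x : Y | RecPt g x} := by
  have hchar : {x : Y | RecPt g x} =
      ⋂ m : ℕ, ⋃ n : ℕ, {x : Y | dist (g^[n+1] x) x < 1/(m+1)} := by
    ext x
    simp only [Set.mem_setOf_eq, Set.mem_iInter, Set.mem_iUnion]
    unfold RecPt
    rw [Metric.mem_closure_iff]
    constructor
    · intro h m
      obtain ⟨y, ⟨n, rfl⟩, hy⟩ := h (1/(m+1)) (by positivity)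
      exact ⟨n, by rwa [dist_comm]⟩
    · intro h ε hε
      obtain ⟨m, hm⟩ := exists_nat_one_div_lt hε
      obtain ⟨n, hn⟩ := h m
      refine ⟨g^[n+1] x, ⟨n, rfl⟩, ?_⟩
      rw [dist_comm]
      calc dist (g^[n+1] x) x < 1/(m+1) := hn
        _ < ε := hm
  rw [hchar]
  apply IsGδ.iInter
  intro m
  apply IsOpen.isGδ
  apply isOpen_iUnion
  intro n
  have hc : Continuous fun x : Y => dist (g^[n+1] x) x := (hg.iterate (n+1)).dist continuous_id
  exact isOpen_lt hc continuous_const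

end gdelta

/-- If a continuous linear operator `T` on a separable infinite-dimensional F-space is
recurrent and cyclic, then its set of cyclic vectors is a dense Gδ subset of `X`; in
particular `T` is quasi-rigid. -/
theorem stmt7 {𝕜 : Type*} [RCLike 𝕜] {X : Type*} [AddCommGroup X] [Module 𝕜 X]
    [TopologicalSpace X] [IsTopologicalAddGroup X] [ContinuousSMul 𝕜 X] [PolishSpace X]
    (hX : ¬ FiniteDimensional 𝕜 X)
    (T : X →L[𝕜] X) (hrec : Dense {x : X | RecPt (⇑T) x})
    (hcyc : ∃ x : X, CyclicVector T x) :
    (IsGδ {x : X | CyclicVector T x} ∧ Dense {x : X | CyclicVector T x}) ∧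
      QuasiRigid ⇑T := by
  classical
  obtain ⟨x0, hx0⟩ := hcyc
  letI := TopologicalSpace.upgradeIsCompletelyMetrizable X
  have hGδC : IsGδ {x : X | CyclicVector T x} := isGδ_cyclicVectors (T := T)
  have hDenseC : Dense {x : X | CyclicVector T x} := dense_cyclicVectors hrec hx0
  have hGδR : IsGδ {x : X | RecPt (⇑T) x} := isGδ_recSet ⇑T T.continuous
  refine ⟨⟨hGδC, hDenseC⟩, ?_⟩
  have hBoth : Dense ({x : X | CyclicVector T x} ∩ {x : X | RecPt ⇑T x}) :=
    Dense.inter_of_Gδ hGδC hGδR hDenseC hrec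
  obtain ⟨x, hxC, hxR⟩ : ∃ x : X, CyclicVector T x ∧ RecPt ⇑T x := by
    obtain ⟨x, hx⟩ := hBoth.nonempty
    exact ⟨x, hx.1, hx.2⟩
  have hchoice : ∀ k : ℕ, ∀ N : ℕ, ∃ n, N + 1 ≤ n ∧ 1 ≤ n ∧ dist ((⇑T)^[n] x) x < 1/(k+1) := by
    intro k N
    obtain ⟨n, h1, h2, h3⟩ := recPt_returns hxR
      (Metric.ball_mem_nhds x (show (0:ℝ) < 1/(k+1) by positivity)) (N+1)
    refine ⟨n, h1, h2, ?_⟩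
    rw [Metric.mem_ball] at h3
    exact h3
  choose F hF1 hF2 hF3 using hchoice
  set nk : ℕ → ℕ := fun k => Nat.rec (F 0 0) (fun k nkk => F (k+1) nkk) k with hnk
  have hnk0 : nk 0 = F 0 0 := rfl
  have hnksucc : ∀ k, nk (k+1) = F (k+1) (nk k) := fun k => rfl
  have hmono : StrictMono nk := by
    apply strictMono_nat_of_lt_succ
    intro k
    rw [hnksucc]
    have := hF1 (k+1) (nk k)
    omega
  have hone : ∀ k, 1 ≤ nk k := by
    intro k
    cases k with
    | zero => rw [hnk0]; exact hF2 0 0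
    | succ k => rw [hnksucc]; exact hF2 (k+1) (nk k)
  have hdist : ∀ k, dist ((⇑T)^[nk k] x) x < 1/(k+1) := by
    intro k
    cases k with
    | zero => rw [hnk0]; exact hF3 0 0
    | succ k => rw [hnksucc]; exact hF3 (k+1) (nk k)
  have hxlim : Tendsto (fun k => (⇑T)^[nk k] x) atTop (𝓝 x) := by
    rw [tendsto_iff_dist_tendsto_zero]
    apply squeeze_zero (fun k => dist_nonneg) (fun k => (hdist k).le)
    exact tendsto_one_div_add_atTop_nhds_zero_nat
  refine ⟨nk, hmono, hone,
    (Submodule.span 𝕜 (Set.range fun n : ℕ => (⇑T)^[n] x) : Set X), hxC, ?_⟩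
  intro y hy
  rw [SetLike.mem_coe] at hy
  induction hy using Submodule.span_induction with
  | mem z hz =>
      obtain ⟨m, rfl⟩ := hz
      have hcomm : (fun k => (⇑T)^[nk k] ((⇑T)^[m] x)) =
          fun k => (⇑T)^[m] ((⇑T)^[nk k] x) := by
        funext k
        rw [← Function.iterate_add_apply, Nat.add_comm, Function.iterate_add_apply]
      rw [hcomm]
      exact ((T.continuous.iterate m).tendsto x).comp hxlim
  | zero =>
      have hz : ∀ n : ℕ, (⇑T)^[n] (0:X) = 0 := by
        intro n
        rw [← ContinuousLinearMap.coe_pow']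
        exact map_zero _
      simp only [hz]
      exact tendsto_const_nhds
  | add a b ha hb iha ihb =>
      have hadd : ∀ n : ℕ, (⇑T)^[n] (a + b) = (⇑T)^[n] a + (⇑T)^[n] b := by
        intro n
        simp only [← ContinuousLinearMap.coe_pow', map_add]
      simp only [hadd]
      exact iha.add ihb
  | smul c a ha iha =>
      have hsmul : ∀ n : ℕ, (⇑T)^[n] (c • a) = c • (⇑T)^[n] a := by
        intro n
        simp only [← ContinuousLinearMap.coe_pow', map_smul]
      simp only [hsmul]
      exact iha.const_smul c
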